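/- arXiv:1811.12471 — 2 statements merged into one kernel-verified Lean document; each statement's English description precedes it below -/
import Mathlib

section
/- The family C5^-, obtained from C5 by deleting the function with values 0-1-1-1-0 at positions 0,1,2,3,4, satisfies ucs(C5^-) = 2. -/
/-- The family `C5`: a function `f : ZMod 5 → Bool` belongs to `C5` iff it takes the
values 1-0-0-1 on some four consecutive vertices of the pentagon. -/
def C5 : Set (ZMod 5 → Bool) :=
  {f | ∃ i : ZMod 5, f i = true ∧ f (i + 1) = false ∧ f (i + 2) = false ∧ f (i + 3) = true}

/-- A family `F` shatters a finite set `X` if every `{0,1}`-function on `X`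
has an extension in `F`. -/
def Shatters {B : Type*} (F : Set (B → Bool)) (X : Finset B) : Prop :=
  ∀ g : B → Bool, ∃ f ∈ F, ∀ x ∈ X, f x = g x

/-- The VC-dimension of a family: the size of the largest shattered set. -/
noncomputable def vcDim {B : Type*} (F : Set (B → Bool)) : ℕ :=
  sSup {n | ∃ X : Finset B, Shatters F X ∧ X.card = n}

/-- `g : B → Option Bool` (a partial function, with domain the set of points
where `g` is `some _`) is a partial function (trace) of the family `F` if some `f ∈ F`
extends it. -/
def IsPartialOf {B : Type*} (F : Set (B → Bool)) (g : B → Option Bool) : Prop :=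
  ∃ f ∈ F, ∀ x b, g x = some b → f x = b

/-- `F` admits an unlabeled compression scheme of size `k`: a pair `(α, β)` where `α`
maps every partial function `g` of `F` (with domain `S`) to a subset `α g ⊆ S` with
`|α g| ≤ k`, `β` maps every subset of the base set to a total function, and
`β (α g)` extends `g`. -/
def HasUCS {B : Type*} (F : Set (B → Bool)) (k : ℕ) : Prop :=
  ∃ (α : (B → Option Bool) → Finset B) (β : Finset B → (B → Bool)),
    ∀ g : B → Option Bool, IsPartialOf F g →
      (∀ x ∈ α g, (g x).isSome) ∧ (α g).card ≤ k ∧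
      (∀ x b, g x = some b → β (α g) x = b)

/-- The minimum size of an unlabeled compression scheme for `F`. -/
noncomputable def ucs {B : Type*} (F : Set (B → Bool)) : ℕ := sInf {k | HasUCS F k}

/-- `C5⁻`: `C5` with the function taking values 0-1-1-1-0 at 0,1,2,3,4 removed. -/
def C5minus : Set (ZMod 5 → Bool) :=
  C5 \ {fun x : ZMod 5 => decide (x = 1 ∨ x = 2 ∨ x = 3)}

def bfun (a b c d e : Bool) : ZMod 5 → Bool := fun x =>
  if x = 0 then a else if x = 1 then b else if x = 2 then c else if x = 3 then d else e

def betaFun (T : Finset (ZMod 5)) : ZMod 5 → Bool :=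
  match decide ((0:ZMod 5) ∈ T), decide ((1:ZMod 5) ∈ T), decide ((2:ZMod 5) ∈ T),
        decide ((3:ZMod 5) ∈ T), decide ((4:ZMod 5) ∈ T) with
  | false,false,false,false,false => bfun false false false false true
  | true ,false,false,false,false => bfun true false false false true
  | false,true ,false,false,false => bfun false true false false true
  | false,false,true ,false,false => bfun false false true false false
  | false,false,false,true ,false => bfun false false false true true
  | false,false,false,false,true  => bfun true false false false false
  | true ,true ,false,false,false => bfun true true false false true
  | true ,false,true ,false,false => bfun true false true false false
  | true ,false,false,true ,false => bfun true false false true true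
  | true ,false,false,false,true  => bfun false true false true false
  | false,true ,true ,false,false => bfun true true true false false
  | false,true ,false,true ,false => bfun false true false true false
  | false,true ,false,false,true  => bfun true true false false false
  | false,false,true ,true ,false => bfun false false true true true
  | false,false,true ,false,true  => bfun false false true false true
  | false,false,false,true ,true  => bfun true false false true false
  | _,_,_,_,_ => bfun false false false false false

set_option maxRecDepth 10000 in
lemma key : ∀ f : ZMod 5 → Bool,
    ((∃ i : ZMod 5, f i = true ∧ f (i+1) = false ∧ f (i+2) = false ∧ f (i+3) = true) ∧
      f ≠ (fun x : ZMod 5 => decide (x = 1 ∨ x = 2 ∨ x = 3))) →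
    ∀ S : Finset (ZMod 5), ∃ T : Finset (ZMod 5),
      T ⊆ S ∧ T.card ≤ 2 ∧ ∀ x ∈ S, betaFun T x = f x := by decide

lemma hasUCS_two : HasUCS C5minus 2 := by
  classical
  refine ⟨fun g => if h : ∃ T : Finset (ZMod 5),
      (∀ x ∈ T, (g x).isSome) ∧ T.card ≤ 2 ∧ (∀ x b, g x = some b → betaFun T x = b)
      then h.choose else ∅, betaFun, ?_⟩
  intro g hg
  obtain ⟨f, hf, hext⟩ := hg
  have hf' : (∃ i : ZMod 5, f i = true ∧ f (i+1) = false ∧ f (i+2) = false ∧ f (i+3) = true) ∧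
      f ≠ (fun x : ZMod 5 => decide (x = 1 ∨ x = 2 ∨ x = 3)) := ⟨hf.1, hf.2⟩
  obtain ⟨T, hTS, hcard, hagree⟩ := key f hf' (Finset.univ.filter fun x => (g x).isSome)
  have h : ∃ T : Finset (ZMod 5),
      (∀ x ∈ T, (g x).isSome) ∧ T.card ≤ 2 ∧ (∀ x b, g x = some b → betaFun T x = b) := by
    refine ⟨T, fun x hx => (Finset.mem_filter.mp (hTS hx)).2, hcard, ?_⟩
    intro x b hb
    have hxS : x ∈ Finset.univ.filter fun x => (g x).isSome :=
      Finset.mem_filter.mpr ⟨Finset.mem_univ x, by rw [hb]; rfl⟩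
    rw [hagree x hxS, hext x b hb]
  beta_reduce
  rw [dif_pos h]
  exact h.choose_spec

def gl : Fin 9 → (ZMod 5 → Bool)
  | 0 => bfun false false true false true
  | 1 => bfun false false true true true
  | 2 => bfun false true false false true
  | 3 => bfun false true false true false
  | 4 => bfun true false false true false
  | 5 => bfun true false false true true
  | 6 => bfun true false true false false
  | 7 => bfun true true false false true
  | 8 => bfun true true true false false

lemma not_hasUCS_one : ¬ HasUCS C5minus 1 := by
  rintro ⟨α, β, h⟩
  have hmem : ∀ j : Fin 9, gl j ∈ C5minus := by
    intro j
    refine ⟨?_, ?_⟩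
    · show ∃ i : ZMod 5, gl j i = true ∧ gl j (i+1) = false ∧ gl j (i+2) = false ∧
        gl j (i+3) = true
      fin_cases j <;> decide
    · show ¬(gl j = fun x : ZMod 5 => decide (x = 1 ∨ x = 2 ∨ x = 3))
      fin_cases j <;> decide
  set Tm : Fin 9 → Finset (ZMod 5) := fun j => α (fun x => some (gl j x)) with hTm
  have hpart : ∀ j : Fin 9, IsPartialOf C5minus (fun x => some (gl j x)) :=
    fun j => ⟨gl j, hmem j, fun x b hb => Option.some_inj.mp hb⟩
  have hβ : ∀ j : Fin 9, β (Tm j) = gl j := by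
    intro j
    funext x
    exact (h _ (hpart j)).2.2 x (gl j x) rfl
  have hinj : Function.Injective Tm := by
    intro i j hij
    have : gl i = gl j := by rw [← hβ i, ← hβ j, hij]
    revert this
    fin_cases i <;> fin_cases j <;> decide
  have hcard : ∀ j : Fin 9, Tm j ∈ Finset.univ.filter fun t : Finset (ZMod 5) => t.card ≤ 1 :=
    fun j => Finset.mem_filter.mpr ⟨Finset.mem_univ _, (h _ (hpart j)).2.1⟩
  have hle : (Finset.univ : Finset (Fin 9)).card ≤
      (Finset.univ.filter fun t : Finset (ZMod 5) => t.card ≤ 1).card :=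
    Finset.card_le_card_of_injOn Tm (fun j _ => hcard j) (hinj.injOn)
  have h6 : (Finset.univ.filter fun t : Finset (ZMod 5) => t.card ≤ 1).card = 6 := by decide
  rw [h6, Finset.card_univ, Fintype.card_fin] at hle
  omega


/-- `ucs (C5⁻) = 2`. -/
theorem ucs_C5minus_eq_two : ucs C5minus = 2 := by
  refine le_antisymm (Nat.sInf_le hasUCS_two) (le_csInf ⟨2, hasUCS_two⟩ ?_)
  intro k hk
  by_contra hlt
  push_neg at hlt
  apply not_hasUCS_one
  obtain ⟨α, β, h⟩ := hk
  exact ⟨α, β, fun g hg => ⟨(h g hg).1, le_trans (h g hg).2.1 (by omega), (h g hg).2.2⟩⟩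
end

section
/- The family P(2) of all four functions on a two-element base set admits a labeled compression scheme of size 1, and no labeled compression scheme of size 0 exists for it; that is, lcs(P(2)) = 1. In particular lcs(P(2)) < ucs(P(2)) = 2. -/
/-- `F` admits a labeled compression scheme of size `k`: `α` maps every partial
function `g` of `F` to a trace (sub-partial-function) of `g` with domain of size at
most `k`, `β` maps every partial function to a total function, and `β (α g)`
extends `g`. -/
def HasLCS {B : Type*} [Fintype B] (F : Set (B → Bool)) (k : ℕ) : Prop :=
  ∃ (α : (B → Option Bool) → (B → Option Bool))
    (β : (B → Option Bool) → (B → Bool)),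
    ∀ g : B → Option Bool, IsPartialOf F g →
      (∀ x b, α g x = some b → g x = some b) ∧
      (Finset.univ.filter fun x => (α g x).isSome).card ≤ k ∧
      (∀ x b, g x = some b → β (α g) x = b)

/-- The minimum size of a labeled compression scheme for `F`. -/
noncomputable def lcs {B : Type*} [Fintype B] (F : Set (B → Bool)) : ℕ :=
  sInf {k | HasLCS F k}

/-- `P 2`: the family of all four functions on a two-element base set. -/
def P2 : Set (Fin 2 → Bool) := Set.univ

/-- The labeled compression map of size 1 for `P2`. -/
def alphaL (g : Fin 2 → Option Bool) : Fin 2 → Option Bool :=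
  if g 0 = none ∨ ((g 1).isSome ∧ g 1 ≠ g 0) then
    (fun x => if x = 1 then g 1 else none)
  else (fun x => if x = 0 then g 0 else none)

/-- The labeled reconstruction map. -/
def betaL (h : Fin 2 → Option Bool) : Fin 2 → Bool := fun x =>
  match h 0 with
  | some b => b
  | none => match h 1 with
    | some b => if x = 1 then b else !b
    | none => false

lemma hasLCS_P2_one : HasLCS P2 1 := by
  refine ⟨alphaL, betaL, fun g hg => ?_⟩
  clear hg
  revert g; decide

lemma not_hasLCS_P2_zero : ¬ HasLCS P2 0 := by
  rintro ⟨α, β, h⟩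
  have hmem : ∀ b : Bool, IsPartialOf P2 (fun _ => some b) := fun b =>
    ⟨fun _ => b, trivial, fun _ _ hb => Option.some_inj.mp hb⟩
  have key : ∀ b : Bool, α (fun _ => some b) = fun _ => none := by
    intro b
    obtain ⟨-, hc, -⟩ := h _ (hmem b)
    funext x
    by_contra hx
    have hxs : (α (fun _ => some b) x).isSome := by
      cases hax : α (fun _ => some b) x with
      | none => exact absurd hax hx
      | some c => rfl
    have : x ∈ Finset.univ.filter fun x => (α (fun _ => some b) x).isSome := by
      simp [hxs]
    have := Finset.card_pos.mpr ⟨x, this⟩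
    omega
  have ht := (h _ (hmem true)).2.2 0 true rfl
  have hf := (h _ (hmem false)).2.2 0 false rfl
  rw [key true] at ht
  rw [key false] at hf
  rw [ht] at hf
  exact Bool.noConfusion hf

lemma hasUCS_P2_two : HasUCS P2 2 := by
  refine ⟨fun g => Finset.univ.filter fun x => g x = some true,
    fun S x => x ∈ S, fun g _ => ?_⟩
  refine ⟨?_, ?_, ?_⟩
  · intro x hx
    simp only [Finset.mem_filter] at hx
    rw [hx.2]; rfl
  · exact (Finset.card_filter_le _ _).trans (by simp)
  · intro x b hb
    cases b with
    | true => simp [hb]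
    | false =>
      simp only [decide_eq_false_iff_not, Finset.mem_filter, not_and]
      intro _; rw [hb]; simp

lemma not_hasUCS_P2_one : ¬ HasUCS P2 1 := by
  rintro ⟨α, β, h⟩
  set t : Bool × Bool → (Fin 2 → Option Bool) :=
    fun p x => some (if x = 0 then p.1 else p.2) with ht
  have hmem : ∀ p, IsPartialOf P2 (t p) := fun p =>
    ⟨fun x => if x = 0 then p.1 else p.2, trivial,
      fun _ _ hb => Option.some_inj.mp hb⟩
  have hval : ∀ p : Bool × Bool, β (α (t p)) 0 = p.1 ∧ β (α (t p)) 1 = p.2 := by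
    intro p
    obtain ⟨-, -, hext⟩ := h _ (hmem p)
    exact ⟨hext 0 p.1 rfl, hext 1 p.2 rfl⟩
  have hinj : Set.InjOn (fun p => α (t p)) (Finset.univ : Finset (Bool × Bool)) := by
    intro p _ q _ hpq
    simp only at hpq
    obtain ⟨hp0, hp1⟩ := hval p
    obtain ⟨hq0, hq1⟩ := hval q
    rw [hpq] at hp0 hp1
    exact Prod.ext (hp0 ▸ hq0.symm ▸ rfl) (hp1 ▸ hq1.symm ▸ rfl)
  have hmaps : ∀ p ∈ (Finset.univ : Finset (Bool × Bool)),
      α (t p) ∈ (Finset.univ : Finset (Finset (Fin 2))).filter fun S => S.card ≤ 1 := by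
    intro p _
    simp only [Finset.mem_filter, Finset.mem_univ, true_and]
    exact (h _ (hmem p)).2.1
  have hcard := Finset.card_le_card_of_injOn _ hmaps hinj
  have h4 : (Finset.univ : Finset (Bool × Bool)).card = 4 := by decide
  have h3 : ((Finset.univ : Finset (Finset (Fin 2))).filter fun S => S.card ≤ 1).card = 3 := by
    decide
  omega

/-- `P 2` admits a labeled compression scheme of size 1 but none of
size 0, so `lcs (P 2) = 1 < 2 = ucs (P 2)`. -/
theorem lcs_P2_eq_one :
    HasLCS P2 1 ∧ ¬ HasLCS P2 0 ∧ lcs P2 = 1 ∧ lcs P2 < ucs P2 ∧ ucs P2 = 2 := by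
  have hl1 := hasLCS_P2_one
  have hl0 := not_hasLCS_P2_zero
  have hu2 := hasUCS_P2_two
  have hu1 := not_hasUCS_P2_one
  have hlcs : lcs P2 = 1 := by
    refine le_antisymm (Nat.sInf_le hl1) ?_
    refine le_csInf ⟨1, hl1⟩ ?_
    intro k hk
    by_contra hlt
    interval_cases k
    exact hl0 hk
  have hucs : ucs P2 = 2 := by
    refine le_antisymm (Nat.sInf_le hu2) ?_
    refine le_csInf ⟨2, hu2⟩ ?_
    intro k hk
    by_contra hlt
    push_neg at hlt
    have : HasUCS P2 1 := by
      obtain ⟨α, β, h⟩ := hk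
      exact ⟨α, β, fun g hg => ⟨(h g hg).1, (h g hg).2.1.trans (by omega), (h g hg).2.2⟩⟩
    exact hu1 this
  exact ⟨hl1, hl0, hlcs, by rw [hlcs, hucs]; norm_num, hucs⟩
end
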